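/- Let d ≥ 1 and let (A_k)_{k∈ℕ} be a sequence of positive semidefinite d×d complex matrices increasing in the Loewner order (A_k ⊑ A_{k+1} for all k). Let P₁ and P₂ be orthogonal projections on ℂ^d (P_iᴴ = P_i and P_i² = P_i) with orthogonal ranges, i.e. P₁P₂ = 0 (so P₁ + P₂ is the orthogonal projection onto the sum of their ranges). If the set {P₁ A_k P₁ : k ∈ ℕ} has a least upper bound in the Loewner order and the set {P₂ A_k P₂ : k ∈ ℕ} has a least upper bound in the Loewner order, then the set {(P₁ + P₂) A_k (P₁ + P₂) : k ∈ ℕ} has a least upper bound in the Loewner order. -/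

import Mathlib

open Matrix
open scoped ComplexOrder

/-- The Loewner order: `A ⊑ B` iff `B - A` is positive semidefinite. -/
def loewner {d : ℕ} (A B : Matrix (Fin d) (Fin d) ℂ) : Prop := (B - A).PosSemidef

/-- If the compressions of an increasing sequence of positive matrices by two
orthogonal projections `P₁, P₂` with orthogonal ranges each have a Loewner least
upper bound, then so does the compression by `P₁ + P₂`. -/
lemma herm_quad_im {d : ℕ} {N : Matrix (Fin d) (Fin d) ℂ} (h : N.IsHermitian) (x : Fin d → ℂ) :
    (star x ⬝ᵥ N *ᵥ x).im = 0 := by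
  have h1 : star (star x ⬝ᵥ N *ᵥ x) = star x ⬝ᵥ N *ᵥ x := by
    nth_rewrite 2 [← h.eq]
    rw [star_dotProduct, star_star, star_mulVec, dotProduct_mulVec]
  exact Complex.conj_eq_iff_im.mp h1

lemma polarization_aux {d : ℕ} (N : Matrix (Fin d) (Fin d) ℂ) (x y : Fin d → ℂ) :
    star x ⬝ᵥ N *ᵥ y = (1/4) * ∑ s ∈ Finset.range 4,
      Complex.I ^ s * (star (Complex.I ^ s • x + y) ⬝ᵥ N *ᵥ (Complex.I ^ s • x + y)) := by
  have hc1 : (starRingEnd ℂ) 1 = 1 := by simp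
  have h2 : Complex.I ^ 2 = -1 := Complex.I_sq
  have h3 : Complex.I ^ 3 = -Complex.I := by rw [pow_succ, h2]; ring
  have h4 : Complex.I ^ 4 = 1 := by rw [(by norm_num : (4:ℕ) = 2*2), pow_mul, h2]; ring
  have h6 : Complex.I ^ 6 = -1 := by rw [(by norm_num : (6:ℕ) = 2*3), pow_mul, h2]; ring
  have h9 : Complex.I ^ 9 = Complex.I := by
    rw [(by norm_num : (9:ℕ) = 2*4+1), pow_succ, pow_mul, h2]; ring
  simp only [Finset.sum_range_succ, Finset.sum_range_zero, mulVec_add, mulVec_smul,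
    dotProduct_add, add_dotProduct, star_add, star_smul, smul_dotProduct, dotProduct_smul,
    smul_eq_mul, pow_succ, pow_zero, star_one, one_smul, one_mul, Complex.star_def,
    _root_.map_mul, Complex.conj_I]
  ring_nf
  rw [hc1, h2, h3, h4, h6, h9]
  ring

lemma lub_of_monotone {d : ℕ} (M : ℕ → Matrix (Fin d) (Fin d) ℂ)
    (hherm : ∀ k, (M k).IsHermitian)
    (hmono : ∀ k, (M (k+1) - M k).PosSemidef)
    (U : Matrix (Fin d) (Fin d) ℂ) (hU : ∀ k, (U - M k).PosSemidef) :
    ∃ B, (∀ k, (B - M k).PosSemidef) ∧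
      ∀ C, (∀ k, (C - M k).PosSemidef) → (C - B).PosSemidef := by
  have hquad_sub : ∀ (N N' : Matrix (Fin d) (Fin d) ℂ) (x : Fin d → ℂ),
      star x ⬝ᵥ (N - N') *ᵥ x = star x ⬝ᵥ N *ᵥ x - star x ⬝ᵥ N' *ᵥ x := by
    intro N N' x; rw [sub_mulVec, dotProduct_sub]
  set q : (Fin d → ℂ) → ℕ → ℝ := fun x k => (star x ⬝ᵥ M k *ᵥ x).re with hq
  have hqmono : ∀ x, Monotone (q x) := by
    intro x
    apply monotone_nat_of_le_succ
    intro k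
    have h := (Complex.le_def.mp ((hmono k).dotProduct_mulVec_nonneg x)).1
    rw [hquad_sub, Complex.sub_re] at h
    simp only [Complex.zero_re] at h
    simpa [hq] using sub_nonneg.mp h
  have hqbdd : ∀ x, BddAbove (Set.range (q x)) := by
    intro x
    refine ⟨(star x ⬝ᵥ U *ᵥ x).re, ?_⟩
    rintro r ⟨k, rfl⟩
    have h := (Complex.le_def.mp ((hU k).dotProduct_mulVec_nonneg x)).1
    rw [hquad_sub, Complex.sub_re] at h
    simp only [Complex.zero_re] at h
    simpa [hq] using sub_nonneg.mp h
  set L : (Fin d → ℂ) → ℝ := fun x => ⨆ k, q x k with hLdef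
  have hL : ∀ x, Filter.Tendsto (q x) Filter.atTop (nhds (L x)) :=
    fun x => tendsto_atTop_ciSup (hqmono x) (hqbdd x)
  have hreal : ∀ k x, star x ⬝ᵥ M k *ᵥ x = ((q x k : ℝ) : ℂ) := by
    intro k x
    apply Complex.ext
    · simp [hq]
    · simp [herm_quad_im (hherm k) x]
  have hc : ∀ x, Filter.Tendsto (fun k => star x ⬝ᵥ M k *ᵥ x) Filter.atTop (nhds ((L x : ℂ))) := by
    intro x
    simp only [hreal]
    exact (Complex.continuous_ofReal.tendsto _).comp (hL x)
  set B : Matrix (Fin d) (Fin d) ℂ := Matrix.of fun i j => (1/4 : ℂ) * ∑ s ∈ Finset.range 4,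
      Complex.I ^ s * ((L (Complex.I ^ s • (Pi.single i 1 : Fin d → ℂ) + Pi.single j 1) : ℝ) : ℂ) with hBdef
  have hentry : ∀ (N : Matrix (Fin d) (Fin d) ℂ) i j,
      N i j = star (Pi.single i 1) ⬝ᵥ N *ᵥ (Pi.single j 1) := by
    intro N i j
    simp [mulVec_single, dotProduct, Pi.single_apply, apply_ite]
  have hBij : ∀ i j, Filter.Tendsto (fun k => M k i j) Filter.atTop (nhds (B i j)) := by
    intro i j
    have heq : (fun k => M k i j) = fun k => (1/4 : ℂ) * ∑ s ∈ Finset.range 4,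
        Complex.I ^ s * (star (Complex.I ^ s • (Pi.single i 1 : Fin d → ℂ) + Pi.single j 1) ⬝ᵥ
          M k *ᵥ (Complex.I ^ s • (Pi.single i 1 : Fin d → ℂ) + Pi.single j 1)) := by
      funext k
      rw [hentry (M k) i j, polarization_aux]
    rw [heq]
    exact tendsto_const_nhds.mul (tendsto_finset_sum _ fun s _ =>
      tendsto_const_nhds.mul (hc _))
  have hquadB : ∀ x, star x ⬝ᵥ B *ᵥ x = ((L x : ℝ) : ℂ) := by
    intro x
    have hexp : ∀ (N : Matrix (Fin d) (Fin d) ℂ),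
        star x ⬝ᵥ N *ᵥ x = ∑ i, ∑ j, star (x i) * N i j * x j := by
      intro N
      simp [dotProduct, Matrix.mulVec, Finset.mul_sum, mul_assoc, mul_comm, mul_left_comm]
    have h1 : Filter.Tendsto (fun k => star x ⬝ᵥ M k *ᵥ x) Filter.atTop
        (nhds (star x ⬝ᵥ B *ᵥ x)) := by
      simp only [hexp]
      exact tendsto_finset_sum _ fun i _ => tendsto_finset_sum _ fun j _ =>
        (tendsto_const_nhds.mul (hBij i j)).mul tendsto_const_nhds
    exact tendsto_nhds_unique h1 (hc x)
  have hBherm : B.IsHermitian := by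
    apply Matrix.ext
    intro i j
    rw [conjTranspose_apply]
    have h2 : Filter.Tendsto (fun k => star (M k j i)) Filter.atTop (nhds (star (B j i))) :=
      (continuous_star.tendsto _).comp (hBij j i)
    have h3 : (fun k => star (M k j i)) = fun k => M k i j := by
      funext k
      rw [← conjTranspose_apply, (hherm k).eq]
    rw [h3] at h2
    exact tendsto_nhds_unique h2 (hBij i j)
  refine ⟨B, fun k => PosSemidef.of_dotProduct_mulVec_nonneg (hBherm.sub (hherm k)) fun x => ?_, fun C hC => ?_⟩
  · rw [hquad_sub, hquadB, hreal k x, ← Complex.ofReal_sub, Complex.zero_le_real, sub_nonneg]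
    exact le_ciSup (hqbdd x) k
  · have hCherm : C.IsHermitian := by
      have h := (hC 0).1.add (hherm 0)
      simpa using h
    refine PosSemidef.of_dotProduct_mulVec_nonneg (hCherm.sub hBherm) fun x => ?_
    have hCreal : star x ⬝ᵥ C *ᵥ x = (((star x ⬝ᵥ C *ᵥ x).re : ℝ) : ℂ) := by
      apply Complex.ext
      · simp
      · simp [herm_quad_im hCherm x]
    rw [hquad_sub, hquadB, hCreal, ← Complex.ofReal_sub, Complex.zero_le_real, sub_nonneg]
    apply ciSup_le
    intro k
    have h := (Complex.le_def.mp ((hC k).dotProduct_mulVec_nonneg x)).1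
    rw [hquad_sub, Complex.sub_re] at h
    simp only [Complex.zero_re] at h
    simpa [hq] using sub_nonneg.mp h

theorem lub_of_compression_sum
    (d : ℕ) (hd : 1 ≤ d) (A : ℕ → Matrix (Fin d) (Fin d) ℂ)
    (hpos : ∀ k, (A k).PosSemidef)
    (hmono : ∀ k, loewner (A k) (A (k + 1)))
    (P₁ P₂ : Matrix (Fin d) (Fin d) ℂ)
    (hP₁herm : P₁ᴴ = P₁) (hP₁idem : P₁ * P₁ = P₁)
    (hP₂herm : P₂ᴴ = P₂) (hP₂idem : P₂ * P₂ = P₂)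
    (horth : P₁ * P₂ = 0)
    (h₁ : ∃ B₁ : Matrix (Fin d) (Fin d) ℂ,
      (∀ k, loewner (P₁ * A k * P₁) B₁) ∧
      ∀ C : Matrix (Fin d) (Fin d) ℂ, (∀ k, loewner (P₁ * A k * P₁) C) → loewner B₁ C)
    (h₂ : ∃ B₂ : Matrix (Fin d) (Fin d) ℂ,
      (∀ k, loewner (P₂ * A k * P₂) B₂) ∧
      ∀ C : Matrix (Fin d) (Fin d) ℂ, (∀ k, loewner (P₂ * A k * P₂) C) → loewner B₂ C) :
    ∃ B : Matrix (Fin d) (Fin d) ℂ,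
      (∀ k, loewner ((P₁ + P₂) * A k * (P₁ + P₂)) B) ∧
      ∀ C : Matrix (Fin d) (Fin d) ℂ,
        (∀ k, loewner ((P₁ + P₂) * A k * (P₁ + P₂)) C) → loewner B C := by
  obtain ⟨B₁, hB₁, -⟩ := h₁
  obtain ⟨B₂, hB₂, -⟩ := h₂
  set Q : Matrix (Fin d) (Fin d) ℂ := P₁ + P₂ with hQdef
  have hQherm : Qᴴ = Q := by rw [hQdef, conjTranspose_add, hP₁herm, hP₂herm]
  have hDherm : (P₁ - P₂)ᴴ = P₁ - P₂ := by rw [conjTranspose_sub, hP₁herm, hP₂herm]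
  have hherm : ∀ k, (Q * A k * Q).IsHermitian := by
    intro k
    have h := isHermitian_conjTranspose_mul_mul Q (hpos k).1
    rwa [hQherm] at h
  have hmono' : ∀ k, (Q * A (k+1) * Q - Q * A k * Q).PosSemidef := by
    intro k
    have h := (hmono k).conjTranspose_mul_mul_same Q
    rw [hQherm] at h
    have heq : Q * (A (k+1) - A k) * Q = Q * A (k+1) * Q - Q * A k * Q := by
      noncomm_ring
    rwa [heq] at h
  set U : Matrix (Fin d) (Fin d) ℂ := B₁ + B₁ + B₂ + B₂ with hUdef
  have hU : ∀ k, (U - Q * A k * Q).PosSemidef := by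
    intro k
    have hdiff : ((P₁ - P₂)ᴴ * A k * (P₁ - P₂)).PosSemidef :=
      (hpos k).conjTranspose_mul_mul_same (P₁ - P₂)
    rw [hDherm] at hdiff
    have hsum := (((hB₁ k).add (hB₂ k)).add ((hB₁ k).add (hB₂ k))).add hdiff
    have heq : B₁ - P₁ * A k * P₁ + (B₂ - P₂ * A k * P₂) +
        (B₁ - P₁ * A k * P₁ + (B₂ - P₂ * A k * P₂)) +
        (P₁ - P₂) * A k * (P₁ - P₂) = U - Q * A k * Q := by
      rw [hUdef, hQdef]; noncomm_ring
    rwa [heq] at hsum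
  obtain ⟨B, hub, hlub⟩ := lub_of_monotone (fun k => Q * A k * Q) hherm hmono' U hU
  exact ⟨B, hub, hlub⟩
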